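/- Let R be a commutative ring with identity, M and M' R-modules, and f : M → M' a surjective R-module homomorphism. If N is a strongly 2-irreducible submodule of M with ker(f) ⊆ N, then f(N) is a strongly 2-irreducible submodule of M'. -/
import Mathlib

def IsStrongly2Irreducible {R M : Type*} [CommRing R] [AddCommGroup M] [Module R M]
    (N : Submodule R M) : Prop :=
  N ≠ ⊤ ∧ ∀ H₁ H₂ H₃ : Submodule R M, H₁ ⊓ H₂ ⊓ H₃ ≤ N →
    H₁ ⊓ H₂ ≤ N ∨ H₁ ⊓ H₃ ≤ N ∨ H₂ ⊓ H₃ ≤ N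

theorem stmt_16 {R M M' : Type*} [CommRing R] [AddCommGroup M] [AddCommGroup M']
    [Module R M] [Module R M'] (f : M →ₗ[R] M') (hf : Function.Surjective f)
    (N : Submodule R M) (hN : IsStrongly2Irreducible N)
    (hker : LinearMap.ker f ≤ N) :
    IsStrongly2Irreducible (N.map f) := by
  obtain ⟨hNtop, h2⟩ := hN
  have hcm : Submodule.comap f (N.map f) = N := by
    rw [Submodule.comap_map_eq, sup_eq_left.mpr hker]
  constructor
  · intro h
    apply hNtop
    rw [← hcm, h, Submodule.comap_top]
  · intro H₁ H₂ H₃ hle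
    have key : Submodule.comap f H₁ ⊓ Submodule.comap f H₂ ⊓ Submodule.comap f H₃ ≤ N := by
      rw [← Submodule.comap_inf, ← Submodule.comap_inf, ← hcm]
      exact Submodule.comap_mono hle
    have mc : ∀ H H' : Submodule R M',
        Submodule.comap f H ⊓ Submodule.comap f H' ≤ N → H ⊓ H' ≤ N.map f := by
      intro H H' h
      have h' : Submodule.comap f (H ⊓ H') ≤ N := by rw [Submodule.comap_inf]; exact h
      have := Submodule.map_mono (f := f) h'
      rwa [Submodule.map_comap_eq_of_surjective hf] at this
    rcases h2 _ _ _ key with h | h | h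
    · exact Or.inl (mc _ _ h)
    · exact Or.inr (Or.inl (mc _ _ h))
    · exact Or.inr (Or.inr (mc _ _ h))
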